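/- Let {F^{ij}} be a compatible family of fundamental matrices whose index set contains the pairs (s,i), (i,j), and (j,t), and let {Pₖ} be a solution containing cameras P_s, P_i, P_j, P_t. Then the epipolar number (e_i^s)ᵀ F^{ij} e_j^t equals 0 if and only if the centers of P_s, P_i, P_j, P_t are coplanar, i.e., nonzero vectors c_s, c_i, c_j, c_t ∈ ℝ⁴ spanning ker P_s, ker P_i, ker P_j, ker P_t span a subspace of ℝ⁴ of dimension at most 3. -/

import Mathlib

open Matrix

/-- The 6×6 matrix whose first three rows form the block `[P₁ | x | 0]` and whose last
three rows form the block `[P₂ | 0 | y]`. -/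
noncomputable def bigMat (P₁ P₂ : Matrix (Fin 3) (Fin 4) ℝ) (x y : Fin 3 → ℝ) :
    Matrix (Fin 6) (Fin 6) ℝ :=
  fun i j =>
    if hi : (i : ℕ) < 3 then
      if hj : (j : ℕ) < 4 then P₁ ⟨(i : ℕ), hi⟩ ⟨(j : ℕ), hj⟩
      else if (j : ℕ) = 4 then x ⟨(i : ℕ), hi⟩ else 0
    else
      if hj : (j : ℕ) < 4 then P₂ ⟨(i : ℕ) - 3, by have := i.isLt; omega⟩ ⟨(j : ℕ), hj⟩
      else if (j : ℕ) = 4 then 0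
      else y ⟨(i : ℕ) - 3, by have := i.isLt; omega⟩

/-- `psi P₁ P₂` is the unique 3×3 matrix `F` such that for all `x y : ℝ³`,
`xᵀ F y = det [P₁ | x | 0; P₂ | 0 | y]`.  (Since the determinant is bilinear in `(x, y)`,
this matrix is obtained by evaluating at pairs of standard basis vectors.) -/
noncomputable def psi (P₁ P₂ : Matrix (Fin 3) (Fin 4) ℝ) : Matrix (Fin 3) (Fin 3) ℝ :=
  fun a b => (bigMat P₁ P₂ (Pi.single a 1) (Pi.single b 1)).det

/-- A camera is a real 3×4 matrix of rank 3. -/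
def IsCamera (P : Matrix (Fin 3) (Fin 4) ℝ) : Prop := P.rank = 3

namespace Stmt7Aux

def exX (x : Fin 3 → ℝ) : Fin 6 → ℝ := fun i => if h : (i : ℕ) < 3 then x ⟨(i : ℕ), h⟩ else 0

def exY (y : Fin 3 → ℝ) : Fin 6 → ℝ :=
  fun i => if (i : ℕ) < 3 then 0 else y ⟨(i : ℕ) - 3, by have := i.isLt; omega⟩

lemma exX_add (x x' : Fin 3 → ℝ) : exX (x + x') = exX x + exX x' := by
  funext i; by_cases h : (i : ℕ) < 3 <;> simp [exX, h]

lemma exX_smul (r : ℝ) (x : Fin 3 → ℝ) : exX (r • x) = r • exX x := by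
  funext i; by_cases h : (i : ℕ) < 3 <;> simp [exX, h]

lemma exY_add (y y' : Fin 3 → ℝ) : exY (y + y') = exY y + exY y' := by
  funext i; by_cases h : (i : ℕ) < 3 <;> simp [exY, h]

lemma exY_smul (r : ℝ) (y : Fin 3 → ℝ) : exY (r • y) = r • exY y := by
  funext i; by_cases h : (i : ℕ) < 3 <;> simp [exY, h]

lemma bigMat_col4 (P₁ P₂ : Matrix (Fin 3) (Fin 4) ℝ) (x x' y : Fin 3 → ℝ) :
    bigMat P₁ P₂ x y = (bigMat P₁ P₂ x' y).updateCol 4 (exX x) := by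
  ext i k
  rw [updateCol_apply]
  by_cases hk : k = (4 : Fin 6)
  · subst hk
    have h4 : ((4 : Fin 6) : ℕ) = 4 := rfl
    by_cases hi : (i : ℕ) < 3 <;> simp [bigMat, exX, hi, h4]
  · have hk' : (k : ℕ) ≠ 4 := fun h => hk (Fin.ext h)
    simp only [if_neg hk]
    by_cases hi : (i : ℕ) < 3 <;> simp [bigMat, hi, hk']

lemma bigMat_col5 (P₁ P₂ : Matrix (Fin 3) (Fin 4) ℝ) (x y y' : Fin 3 → ℝ) :
    bigMat P₁ P₂ x y = (bigMat P₁ P₂ x y').updateCol 5 (exY y) := by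
  ext i k
  rw [updateCol_apply]
  by_cases hk : k = (5 : Fin 6)
  · subst hk
    have h5 : ((5 : Fin 6) : ℕ) = 5 := rfl
    by_cases hi : (i : ℕ) < 3 <;> simp [bigMat, exY, hi, h5]
  · have hk' : (k : ℕ) ≠ 5 := fun h => hk (Fin.ext h)
    have hor : (k : ℕ) < 4 ∨ (k : ℕ) = 4 := by have := k.isLt; omega
    simp only [if_neg hk]
    rcases hor with h4 | h4 <;> by_cases hi : (i : ℕ) < 3 <;>
      simp [bigMat, hi, h4] <;> omega

noncomputable def G (P₁ P₂ : Matrix (Fin 3) (Fin 4) ℝ) :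
    (Fin 3 → ℝ) →ₗ[ℝ] (Fin 3 → ℝ) →ₗ[ℝ] ℝ :=
  LinearMap.mk₂ ℝ (fun x y => (bigMat P₁ P₂ x y).det)
    (fun x x' y => by
      rw [bigMat_col4 P₁ P₂ (x + x') 0 y, bigMat_col4 P₁ P₂ x 0 y, bigMat_col4 P₁ P₂ x' 0 y,
        exX_add, det_updateCol_add])
    (fun r x y => by
      rw [bigMat_col4 P₁ P₂ (r • x) 0 y, bigMat_col4 P₁ P₂ x 0 y, exX_smul,
        det_updateCol_smul]
      rfl)
    (fun x y y' => by
      rw [bigMat_col5 P₁ P₂ x (y + y') 0, bigMat_col5 P₁ P₂ x y 0, bigMat_col5 P₁ P₂ x y' 0,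
        exY_add, det_updateCol_add])
    (fun r x y => by
      rw [bigMat_col5 P₁ P₂ x (r • y) 0, bigMat_col5 P₁ P₂ x y 0, exY_smul,
        det_updateCol_smul]
      rfl)

lemma G_apply (P₁ P₂ : Matrix (Fin 3) (Fin 4) ℝ) (x y : Fin 3 → ℝ) :
    G P₁ P₂ x y = (bigMat P₁ P₂ x y).det := rfl

end Stmt7Aux

namespace Stmt7Aux

lemma pi_single_sum (x : Fin 3 → ℝ) : x = ∑ a, x a • (Pi.single a 1 : Fin 3 → ℝ) := by
  funext j
  simp [Pi.single_apply, Finset.sum_ite_eq, mul_comm]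

lemma dot_psi (P₁ P₂ : Matrix (Fin 3) (Fin 4) ℝ) (x y : Fin 3 → ℝ) :
    x ⬝ᵥ (psi P₁ P₂ *ᵥ y) = G P₁ P₂ x y := by
  have hG : ∀ a b, G P₁ P₂ (Pi.single a 1) (Pi.single b 1) = psi P₁ P₂ a b := fun a b => rfl
  conv_rhs => rw [pi_single_sum x, pi_single_sum y]
  simp only [map_sum, LinearMap.sum_apply, _root_.map_smul, LinearMap.smul_apply, map_sum, smul_eq_mul, hG]
  rw [show x ⬝ᵥ (psi P₁ P₂ *ᵥ y) = ∑ a, ∑ b, x a * (psi P₁ P₂ a b * y b) by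
    simp [dotProduct, mulVec, Finset.mul_sum]]
  rw [Finset.sum_comm]
  refine Finset.sum_congr rfl fun b _ => ?_
  rw [Finset.mul_sum]
  exact Finset.sum_congr rfl fun a _ => by ring

lemma fin6_vals : ((0 : Fin 6) : ℕ) = 0 ∧ ((1 : Fin 6) : ℕ) = 1 ∧ ((2 : Fin 6) : ℕ) = 2 ∧
    ((3 : Fin 6) : ℕ) = 3 ∧ ((4 : Fin 6) : ℕ) = 4 ∧ ((5 : Fin 6) : ℕ) = 5 :=
  ⟨rfl, rfl, rfl, rfl, rfl, rfl⟩

lemma fin4_mk0 : ∀ h : (0 : ℕ) < 4, (⟨0, h⟩ : Fin 4) = 0 := fun _ => rfl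
lemma fin4_mk1 : ∀ h : (1 : ℕ) < 4, (⟨1, h⟩ : Fin 4) = 1 := fun _ => rfl
lemma fin4_mk2 : ∀ h : (2 : ℕ) < 4, (⟨2, h⟩ : Fin 4) = 2 := fun _ => rfl
lemma fin4_mk3 : ∀ h : (3 : ℕ) < 4, (⟨3, h⟩ : Fin 4) = 3 := fun _ => rfl

lemma mulVec6_expand (M : Matrix (Fin 6) (Fin 6) ℝ) (v : Fin 6 → ℝ) (r : Fin 6) :
    (M *ᵥ v) r =
      M r 0 * v 0 + M r 1 * v 1 + M r 2 * v 2 + M r 3 * v 3 + M r 4 * v 4 + M r 5 * v 5 := by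
  simp [mulVec, dotProduct, Fin.sum_univ_six]

lemma det_bigMat_diag (P₁ P₂ : Matrix (Fin 3) (Fin 4) ℝ) (a : Fin 4 → ℝ) :
    (bigMat P₁ P₂ (P₁ *ᵥ a) (P₂ *ᵥ a)).det = 0 := by
  obtain ⟨e0, e1, e2, e3, e4, e5⟩ := fin6_vals
  refine Matrix.exists_mulVec_eq_zero_iff.mp
    ⟨fun k => if h : (k : ℕ) < 4 then a ⟨(k : ℕ), h⟩ else -1, ?_, ?_⟩
  · intro h
    have := congrFun h 4
    simp [e4] at this
  · funext r
    rw [mulVec6_expand]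
    by_cases hr : (r : ℕ) < 3 <;>
      simp [bigMat, hr, e0, e1, e2, e3, e4, e5, fin4_mk0, fin4_mk1, fin4_mk2, fin4_mk3,
        mulVec, dotProduct, Fin.sum_univ_four] <;> ring

end Stmt7Aux

namespace Stmt7Aux

lemma det_bigMat_rker (P₁ P₂ : Matrix (Fin 3) (Fin 4) ℝ) (x : Fin 3 → ℝ) (c : Fin 4 → ℝ)
    (hc : P₁ *ᵥ c = 0) : (bigMat P₁ P₂ x (P₂ *ᵥ c)).det = 0 := by
  obtain ⟨e0, e1, e2, e3, e4, e5⟩ := fin6_vals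
  refine Matrix.exists_mulVec_eq_zero_iff.mp
    ⟨fun k => if h : (k : ℕ) < 4 then c ⟨(k : ℕ), h⟩ else if (k : ℕ) = 4 then 0 else -1, ?_, ?_⟩
  · intro h
    have := congrFun h 5
    simp [e5] at this
  · funext r
    rw [mulVec6_expand]
    have hc1 : ∀ w : Fin 3, P₁ w 0 * c 0 + P₁ w 1 * c 1 + P₁ w 2 * c 2 + P₁ w 3 * c 3 = 0 := by
      intro w
      have := congrFun hc w
      simpa [mulVec, dotProduct, Fin.sum_univ_four] using this
    by_cases hr : (r : ℕ) < 3 <;>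
      simp [bigMat, hr, e0, e1, e2, e3, e4, e5, fin4_mk0, fin4_mk1, fin4_mk2, fin4_mk3,
        mulVec, dotProduct, Fin.sum_univ_four] <;>
    simp [hc1]

lemma det_bigMat_common (P₁ P₂ : Matrix (Fin 3) (Fin 4) ℝ) (x y : Fin 3 → ℝ) (c : Fin 4 → ℝ)
    (hc : c ≠ 0) (h1 : P₁ *ᵥ c = 0) (h2 : P₂ *ᵥ c = 0) :
    (bigMat P₁ P₂ x y).det = 0 := by
  obtain ⟨e0, e1, e2, e3, e4, e5⟩ := fin6_vals
  refine Matrix.exists_mulVec_eq_zero_iff.mp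
    ⟨fun k => if h : (k : ℕ) < 4 then c ⟨(k : ℕ), h⟩ else 0, ?_, ?_⟩
  · intro h
    apply hc
    funext w
    have := congrFun h ⟨(w : ℕ), by have := w.isLt; omega⟩
    simpa [show ((⟨(w : ℕ), by have := w.isLt; omega⟩ : Fin 6) : ℕ) = (w : ℕ) from rfl,
      w.isLt] using this
  · funext r
    rw [mulVec6_expand]
    have hc1 : ∀ w : Fin 3, P₁ w 0 * c 0 + P₁ w 1 * c 1 + P₁ w 2 * c 2 + P₁ w 3 * c 3 = 0 := by
      intro w
      have := congrFun h1 w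
      simpa [mulVec, dotProduct, Fin.sum_univ_four] using this
    have hc2 : ∀ w : Fin 3, P₂ w 0 * c 0 + P₂ w 1 * c 1 + P₂ w 2 * c 2 + P₂ w 3 * c 3 = 0 := by
      intro w
      have := congrFun h2 w
      simpa [mulVec, dotProduct, Fin.sum_univ_four] using this
    by_cases hr : (r : ℕ) < 3 <;>
      simp [bigMat, hr, e0, e1, e2, e3, e4, e5, fin4_mk0, fin4_mk1, fin4_mk2, fin4_mk3] <;>
      simp [hc1, hc2]

end Stmt7Aux

namespace Stmt7Aux

open Module Submodule

noncomputable def G4 (P₁ P₂ : Matrix (Fin 3) (Fin 4) ℝ) :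
    (Fin 4 → ℝ) →ₗ[ℝ] (Fin 4 → ℝ) →ₗ[ℝ] ℝ :=
  (G P₁ P₂).compl₁₂ P₁.mulVecLin P₂.mulVecLin

lemma G4_apply (P₁ P₂ : Matrix (Fin 3) (Fin 4) ℝ) (a b : Fin 4 → ℝ) :
    G4 P₁ P₂ a b = G P₁ P₂ (P₁ *ᵥ a) (P₂ *ᵥ b) := by
  rw [G4, LinearMap.compl₁₂_apply, Matrix.mulVecLin_apply, Matrix.mulVecLin_apply]

lemma G4_diag (P₁ P₂ : Matrix (Fin 3) (Fin 4) ℝ) (a : Fin 4 → ℝ) : G4 P₁ P₂ a a = 0 := by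
  rw [G4_apply, G_apply]
  exact det_bigMat_diag P₁ P₂ a

lemma G4_alt (P₁ P₂ : Matrix (Fin 3) (Fin 4) ℝ) (a b : Fin 4 → ℝ) :
    G4 P₁ P₂ b a = -G4 P₁ P₂ a b := by
  have h := G4_diag P₁ P₂ (a + b)
  simp only [map_add, LinearMap.add_apply, G4_diag P₁ P₂ a, G4_diag P₁ P₂ b] at h
  linarith

lemma G4_left_zero (P₁ P₂ : Matrix (Fin 3) (Fin 4) ℝ) {a : Fin 4 → ℝ} (b : Fin 4 → ℝ)
    (h : P₁ *ᵥ a = 0) : G4 P₁ P₂ a b = 0 := by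
  rw [G4_apply, h]
  simp

lemma G4_right_zero (P₁ P₂ : Matrix (Fin 3) (Fin 4) ℝ) (a : Fin 4 → ℝ) {b : Fin 4 → ℝ}
    (h : P₂ *ᵥ b = 0) : G4 P₁ P₂ a b = 0 := by
  rw [G4_apply, h]
  simp

/-- ψ kills `P₂ *ᵥ c` when `c` is the center of `P₁`. -/
lemma psi_mulVec_ker (P₁ P₂ : Matrix (Fin 3) (Fin 4) ℝ) (c : Fin 4 → ℝ)
    (hc : P₁ *ᵥ c = 0) : psi P₁ P₂ *ᵥ (P₂ *ᵥ c) = 0 := by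
  funext a
  have h1 : (Pi.single a 1 : Fin 3 → ℝ) ⬝ᵥ (psi P₁ P₂ *ᵥ (P₂ *ᵥ c)) =
      (psi P₁ P₂ *ᵥ (P₂ *ᵥ c)) a := by
    simp [dotProduct, Pi.single_apply]
  rw [← h1, dot_psi, G_apply, det_bigMat_rker P₁ P₂ _ c hc]
  rfl

/-- common center kills ψ entirely. -/
lemma psi_zero_of_common (P₁ P₂ : Matrix (Fin 3) (Fin 4) ℝ) (c : Fin 4 → ℝ)
    (hc : c ≠ 0) (h1 : P₁ *ᵥ c = 0) (h2 : P₂ *ᵥ c = 0) : psi P₁ P₂ = 0 := by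
  funext a b
  exact det_bigMat_common P₁ P₂ _ _ c hc h1 h2

lemma ker_finrank_eq (M : Matrix (Fin 3) (Fin 3) ℝ) (h : M.rank = 2) :
    finrank ℝ (LinearMap.ker M.mulVecLin) = 1 := by
  have h1 := LinearMap.finrank_range_add_finrank_ker M.mulVecLin
  have h2 : finrank ℝ (LinearMap.range M.mulVecLin) = 2 := h
  rw [h2, show finrank ℝ (Fin 3 → ℝ) = 3 by simp] at h1
  omega

lemma ker_finrank_cam (M : Matrix (Fin 3) (Fin 4) ℝ) (h : M.rank = 3) :
    finrank ℝ (LinearMap.ker M.mulVecLin) = 1 := by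
  have h1 := LinearMap.finrank_range_add_finrank_ker M.mulVecLin
  have h2 : finrank ℝ (LinearMap.range M.mulVecLin) = 3 := h
  rw [h2, show finrank ℝ (Fin 4 → ℝ) = 4 by simp] at h1
  omega

lemma cam_surj (M : Matrix (Fin 3) (Fin 4) ℝ) (h : M.rank = 3) (x : Fin 3 → ℝ) :
    ∃ a, M *ᵥ a = x := by
  have h2 : finrank ℝ (LinearMap.range M.mulVecLin) = 3 := h
  have h3 : LinearMap.range M.mulVecLin = ⊤ :=
    Submodule.eq_top_of_finrank_eq (by rw [h2]; simp)
  have := LinearMap.range_eq_top.mp h3 x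
  simpa [Matrix.mulVecLin_apply] using this

lemma exists_smul_of_mem {V : Type*} [AddCommGroup V] [Module ℝ V] [FiniteDimensional ℝ V]
    (K : Submodule ℝ V) (hK : finrank ℝ K = 1) {v w : V} (hv : v ∈ K) (hv0 : v ≠ 0)
    (hw : w ∈ K) : ∃ r : ℝ, w = r • v := by
  have h1 : Submodule.span ℝ {v} ≤ K := by
    rw [Submodule.span_le, Set.singleton_subset_iff]; exact hv
  have h2 : Submodule.span ℝ {v} = K := by
    apply Submodule.eq_of_le_of_finrank_le h1
    rw [hK, finrank_span_singleton hv0]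
  rw [← h2] at hw
  obtain ⟨r, hr⟩ := Submodule.mem_span_singleton.mp hw
  exact ⟨r, hr.symm⟩

lemma exists_ker_ne_zero (M : Matrix (Fin 3) (Fin 4) ℝ) (h : M.rank = 3) :
    ∃ c : Fin 4 → ℝ, c ≠ 0 ∧ M *ᵥ c = 0 := by
  have h1 := ker_finrank_cam M h
  have h2 : LinearMap.ker M.mulVecLin ≠ ⊥ := by
    intro hbot
    rw [hbot] at h1
    simp at h1
  obtain ⟨c, hc, hc0⟩ := Submodule.exists_mem_ne_zero_of_ne_bot h2
  exact ⟨c, hc0, hc⟩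

end Stmt7Aux

namespace Stmt7Aux

lemma range_vec4 {α : Type*} (a b c d : α) :
    Set.range ![a, b, c, d] = {a, b, c, d} := by
  ext x
  constructor
  · rintro ⟨k, rfl⟩
    fin_cases k <;> simp
  · intro hx
    rcases hx with rfl | rfl | rfl | rfl
    · exact ⟨0, rfl⟩
    · exact ⟨1, rfl⟩
    · exact ⟨2, rfl⟩
    · exact ⟨3, rfl⟩

end Stmt7Aux

open Stmt7Aux Module Submodule

/-- for a compatible family with solution `P`, the epipolar number
`(e_i^s)ᵀ F^{ij} e_j^t` vanishes iff the centers of `P s, P i, P j, P t` are coplanar. -/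
theorem stmt7 (n : ℕ) (E : Fin n → Fin n → Prop) (hEsym : ∀ i j, E i j → E j i)
    (F : Fin n → Fin n → Matrix (Fin 3) (Fin 3) ℝ)
    (hFsym : ∀ i j, F j i = (F i j)ᵀ)
    (hrank : ∀ i j, E i j → (F i j).rank = 2)
    (s i j t : Fin n) (hsi : E s i) (hij : E i j) (hjt : E j t)
    (P : Fin n → Matrix (Fin 3) (Fin 4) ℝ) (hP : ∀ k, IsCamera (P k))
    (lam : Fin n → Fin n → ℝ)
    (hsol : ∀ a b, E a b → lam a b ≠ 0 ∧ lam a b • F a b = psi (P a) (P b))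
    (eis ejt : Fin 3 → ℝ)
    (heis : eis ≠ 0) (hkis : F s i *ᵥ eis = 0)
    (hejt : ejt ≠ 0) (hkjt : F t j *ᵥ ejt = 0) :
    eis ⬝ᵥ (F i j *ᵥ ejt) = 0 ↔
      ∀ cs ci cj ct : Fin 4 → ℝ,
        cs ≠ 0 → P s *ᵥ cs = 0 → ci ≠ 0 → P i *ᵥ ci = 0 →
        cj ≠ 0 → P j *ᵥ cj = 0 → ct ≠ 0 → P t *ᵥ ct = 0 →
        Module.finrank ℝ (Submodule.span ℝ {cs, ci, cj, ct}) ≤ 3 := by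
  classical
  obtain ⟨hlsi, hpsi_si⟩ := hsol s i hsi
  obtain ⟨hlij, hpsi_ij⟩ := hsol i j hij
  obtain ⟨hltj, hpsi_tj⟩ := hsol t j (hEsym j t hjt)
  have hFsi_rank : (F s i).rank = 2 := hrank s i hsi
  have hFij_rank : (F i j).rank = 2 := hrank i j hij
  have hFtj_rank : (F t j).rank = 2 := by
    rw [hFsym j t, Matrix.rank_transpose]
    exact hrank j t hjt
  have hFsi_ne : F s i ≠ 0 := fun h0 => by
    rw [h0, Matrix.rank_zero] at hFsi_rank; exact absurd hFsi_rank (by norm_num)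
  have hFij_ne : F i j ≠ 0 := fun h0 => by
    rw [h0, Matrix.rank_zero] at hFij_rank; exact absurd hFij_rank (by norm_num)
  have hFtj_ne : F t j ≠ 0 := fun h0 => by
    rw [h0, Matrix.rank_zero] at hFtj_rank; exact absurd hFtj_rank (by norm_num)
  have key : ∀ cs ci cj ct : Fin 4 → ℝ, cs ≠ 0 → P s *ᵥ cs = 0 → ci ≠ 0 → P i *ᵥ ci = 0 →
      cj ≠ 0 → P j *ᵥ cj = 0 → ct ≠ 0 → P t *ᵥ ct = 0 →
      (eis ⬝ᵥ (F i j *ᵥ ejt) = 0 ↔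
        Module.finrank ℝ (Submodule.span ℝ ({cs, ci, cj, ct} : Set (Fin 4 → ℝ))) ≤ 3) := by
    intro cs ci cj ct hcs0 hcs hci0 hci hcj0 hcj hct0 hct
    -- no coinciding centers among relevant pairs
    have hPics : P i *ᵥ cs ≠ 0 := by
      intro h0
      have hpsi0 : psi (P s) (P i) = 0 := psi_zero_of_common _ _ cs hcs0 hcs h0
      rw [hpsi0] at hpsi_si
      rcases smul_eq_zero.mp hpsi_si with h | h
      · exact hlsi h
      · exact hFsi_ne h
    have hPjct : P j *ᵥ ct ≠ 0 := by
      intro h0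
      have hpsi0 : psi (P t) (P j) = 0 := psi_zero_of_common _ _ ct hct0 hct h0
      rw [hpsi0] at hpsi_tj
      rcases smul_eq_zero.mp hpsi_tj with h | h
      · exact hltj h
      · exact hFtj_ne h
    have hPjci : P j *ᵥ ci ≠ 0 := by
      intro h0
      have hpsi0 : psi (P i) (P j) = 0 := psi_zero_of_common _ _ ci hci0 hci h0
      rw [hpsi0] at hpsi_ij
      rcases smul_eq_zero.mp hpsi_ij with h | h
      · exact hlij h
      · exact hFij_ne h
    -- epipole decompositions
    have hker_si : finrank ℝ (LinearMap.ker (F s i).mulVecLin) = 1 :=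
      ker_finrank_eq _ hFsi_rank
    have hmem1 : P i *ᵥ cs ∈ LinearMap.ker (F s i).mulVecLin := by
      rw [LinearMap.mem_ker, Matrix.mulVecLin_apply]
      have h := psi_mulVec_ker (P s) (P i) cs hcs
      rw [← hpsi_si, Matrix.smul_mulVec] at h
      exact (smul_eq_zero.mp h).resolve_left hlsi
    have hmem2 : eis ∈ LinearMap.ker (F s i).mulVecLin := by
      rw [LinearMap.mem_ker, Matrix.mulVecLin_apply]
      exact hkis
    obtain ⟨α, hα⟩ := exists_smul_of_mem _ hker_si hmem1 hPics hmem2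
    have hα0 : α ≠ 0 := by
      rintro rfl
      rw [zero_smul] at hα
      exact heis hα
    have hker_tj : finrank ℝ (LinearMap.ker (F t j).mulVecLin) = 1 :=
      ker_finrank_eq _ hFtj_rank
    have hmem3 : P j *ᵥ ct ∈ LinearMap.ker (F t j).mulVecLin := by
      rw [LinearMap.mem_ker, Matrix.mulVecLin_apply]
      have h := psi_mulVec_ker (P t) (P j) ct hct
      rw [← hpsi_tj, Matrix.smul_mulVec] at h
      exact (smul_eq_zero.mp h).resolve_left hltj
    have hmem4 : ejt ∈ LinearMap.ker (F t j).mulVecLin := by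
      rw [LinearMap.mem_ker, Matrix.mulVecLin_apply]
      exact hkjt
    obtain ⟨β, hβ⟩ := exists_smul_of_mem _ hker_tj hmem3 hPjct hmem4
    have hβ0 : β ≠ 0 := by
      rintro rfl
      rw [zero_smul] at hβ
      exact hejt hβ
    -- radical/alternation facts for G4
    have hLci : ∀ b, G4 (P i) (P j) ci b = 0 := fun b => G4_left_zero _ _ b hci
    have hRci : ∀ a, G4 (P i) (P j) a ci = 0 := fun a => by rw [G4_alt, hLci, neg_zero]
    have hRcj : ∀ a, G4 (P i) (P j) a cj = 0 := fun a => G4_right_zero _ _ a hcj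
    have hLcj : ∀ b, G4 (P i) (P j) cj b = 0 := fun b => by rw [G4_alt, hRcj, neg_zero]
    -- the central equation
    have hmain : lam i j * (eis ⬝ᵥ (F i j *ᵥ ejt)) = α * (β * G4 (P i) (P j) cs ct) := by
      rw [hα, hβ, G4_apply, ← dot_psi, ← hpsi_ij]
      simp only [smul_dotProduct, dotProduct_smul, Matrix.mulVec_smul,
        Matrix.smul_mulVec, smul_eq_mul]
      ring
    constructor
    · -- epipolar number zero → coplanar
      intro h0
      have hG0 : G4 (P i) (P j) cs ct = 0 := by
        rw [h0, mul_zero] at hmain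
        rcases mul_eq_zero.mp hmain.symm with h | h
        · exact absurd h hα0
        rcases mul_eq_zero.mp h with h' | h'
        · exact absurd h' hβ0
        · exact h'
      by_contra hgt
      push_neg at hgt
      have hsp : Submodule.span ℝ ({cs, ci, cj, ct} : Set (Fin 4 → ℝ)) = ⊤ := by
        apply Submodule.eq_top_of_finrank_eq
        have hle : finrank ℝ (Submodule.span ℝ ({cs, ci, cj, ct} : Set (Fin 4 → ℝ))) ≤
            finrank ℝ (Fin 4 → ℝ) := Submodule.finrank_le _
        have h4 : finrank ℝ (Fin 4 → ℝ) = 4 := by simp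
        rw [h4] at hle ⊢
        omega
      have hgen : ∀ x ∈ ({cs, ci, cj, ct} : Set (Fin 4 → ℝ)),
          ∀ y ∈ ({cs, ci, cj, ct} : Set (Fin 4 → ℝ)), G4 (P i) (P j) x y = 0 := by
        intro x hx y hy
        simp only [Set.mem_insert_iff, Set.mem_singleton_iff] at hx hy
        rcases hx with rfl | rfl | rfl | rfl
        · rcases hy with rfl | rfl | rfl | rfl
          · exact G4_diag _ _ _
          · exact hRci _
          · exact hRcj _
          · exact hG0
        · exact hLci _
        · exact hLcj _
        · rcases hy with rfl | rfl | rfl | rfl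
          · rw [G4_alt, hG0, neg_zero]
          · exact hRci _
          · exact hRcj _
          · exact G4_diag _ _ _
      have hall : ∀ a b : Fin 4 → ℝ, G4 (P i) (P j) a b = 0 := by
        have h1 : ∀ x, (∀ y ∈ ({cs, ci, cj, ct} : Set (Fin 4 → ℝ)), G4 (P i) (P j) x y = 0) →
            ∀ b : Fin 4 → ℝ, G4 (P i) (P j) x b = 0 := by
          intro x hx b
          have hb : b ∈ Submodule.span ℝ ({cs, ci, cj, ct} : Set (Fin 4 → ℝ)) := by
            rw [hsp]; trivial
          refine Submodule.span_induction (p := fun y _ => G4 (P i) (P j) x y = 0) hx ?_ ?_ ?_ hb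
          · simp
          · intro u v _ _ hu hv
            rw [map_add, hu, hv, add_zero]
          · intro r u _ hu
            rw [_root_.map_smul, hu, smul_zero]
        intro a b
        have ha : a ∈ Submodule.span ℝ ({cs, ci, cj, ct} : Set (Fin 4 → ℝ)) := by
          rw [hsp]; trivial
        refine Submodule.span_induction (p := fun x _ => G4 (P i) (P j) x b = 0)
          (fun x hx => h1 x (hgen x hx) b) ?_ ?_ ?_ ha
        · simp
        · intro u v _ _ hu hv
          rw [map_add, LinearMap.add_apply, hu, hv, add_zero]
        · intro r u _ hu
          rw [_root_.map_smul, LinearMap.smul_apply, hu, smul_zero]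
      have hpsi0 : psi (P i) (P j) = 0 := by
        funext a b
        obtain ⟨a', ha'⟩ := cam_surj (P i) (hP i) (Pi.single a 1)
        obtain ⟨b', hb'⟩ := cam_surj (P j) (hP j) (Pi.single b 1)
        have h := hall a' b'
        rw [G4_apply, ha', hb', G_apply] at h
        simpa [psi] using h
      rw [hpsi0] at hpsi_ij
      rcases smul_eq_zero.mp hpsi_ij with h | h
      · exact hlij h
      · exact hFij_ne h
    · -- coplanar → epipolar number zero
      intro hle
      have hnli : ¬ LinearIndependent ℝ ![cs, ci, cj, ct] := by
        intro hli
        have hcard := finrank_span_eq_card hli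
        rw [range_vec4] at hcard
        simp only [Fintype.card_fin] at hcard
        omega
      obtain ⟨g, hgsum, k, hk⟩ := Fintype.not_linearIndependent_iff.mp hnli
      rw [Fin.sum_univ_four] at hgsum
      simp only [Matrix.cons_val_zero, Matrix.cons_val_one, Matrix.head_cons,
        Matrix.cons_val_two, Matrix.tail_cons, Matrix.cons_val_three] at hgsum
      have e1 : g 0 * G4 (P i) (P j) cs ct = 0 := by
        have h := congrArg (fun z => G4 (P i) (P j) z ct) hgsum
        simpa [map_add, LinearMap.add_apply, _root_.map_smul, LinearMap.smul_apply,
          smul_eq_mul, hLci, hLcj, G4_diag] using h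
      have e2 : g 3 * G4 (P i) (P j) cs ct = 0 := by
        have h := congrArg (fun z => G4 (P i) (P j) cs z) hgsum
        simpa [map_add, _root_.map_smul, smul_eq_mul, hRci, hRcj, G4_diag] using h
      have hG0 : G4 (P i) (P j) cs ct = 0 := by
        rcases mul_eq_zero.mp e1 with h0 | h
        · rcases mul_eq_zero.mp e2 with h3 | h
          · -- g 0 = 0 and g 3 = 0
            rw [h0, zero_smul, zero_add] at hgsum
            rw [h3, zero_smul, add_zero] at hgsum
            by_cases hg1 : g 1 = 0
            · rw [hg1, zero_smul, zero_add] at hgsum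
              have hg2 : g 2 = 0 := by
                rcases smul_eq_zero.mp hgsum with h' | h'
                · exact h'
                · exact absurd h' hcj0
              exact absurd (by fin_cases k <;> assumption : g k = 0) hk
            · exfalso
              apply hPjci
              have hPj : P j *ᵥ (g 1 • ci + g 2 • cj) = 0 := by
                rw [hgsum, Matrix.mulVec_zero]
              rw [Matrix.mulVec_add, Matrix.mulVec_smul, Matrix.mulVec_smul, hcj,
                smul_zero, add_zero] at hPj
              exact (smul_eq_zero.mp hPj).resolve_left hg1
          · exact h
        · exact h
      rw [hG0, mul_zero, mul_zero] at hmain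
      rcases mul_eq_zero.mp hmain with h | h
      · exact absurd h hlij
      · exact h
  constructor
  · intro h0 cs ci cj ct h1 h2 h3 h4 h5 h6 h7 h8
    exact (key cs ci cj ct h1 h2 h3 h4 h5 h6 h7 h8).mp h0
  · intro hcop
    obtain ⟨cs, hcs0, hcs⟩ := exists_ker_ne_zero (P s) (hP s)
    obtain ⟨ci, hci0, hci⟩ := exists_ker_ne_zero (P i) (hP i)
    obtain ⟨cj, hcj0, hcj⟩ := exists_ker_ne_zero (P j) (hP j)
    obtain ⟨ct, hct0, hct⟩ := exists_ker_ne_zero (P t) (hP t)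
    exact (key cs ci cj ct hcs0 hcs hci0 hci hcj0 hcj hct0 hct).mpr
      (hcop cs ci cj ct hcs0 hcs hci0 hci hcj0 hcj hct0 hct)
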